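/- Let Δ be a finite set of strongly convex polyhedral cones in ℝ^n forming a fan whose support is all of ℝ^n (a complete fan), and let φ : ℝ^n → ℝ^m be a linear map such that for every σ ∈ Δ, the image φ(σ) is strongly convex (contains no line). Then the set Δ_0 = {σ ∈ Δ : σ ⊆ ker(φ)} is a fan whose support equals ker(φ). -/

import Mathlib

/-- The cone generated by a finite set of vectors: all nonnegative linear
combinations. -/
def nonnegHull {n : ℕ} (s : Finset (Fin n → ℝ)) : Set (Fin n → ℝ) :=
  {x | ∃ c : (Fin n → ℝ) → ℝ, (∀ v, 0 ≤ c v) ∧ x = ∑ v ∈ s, c v • v}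

/-- A polyhedral cone: the nonnegative hull of finitely many vectors. -/
def IsPolyhedralCone {n : ℕ} (σ : Set (Fin n → ℝ)) : Prop :=
  ∃ s : Finset (Fin n → ℝ), σ = nonnegHull s

/-- A cone is strongly convex if it contains no nonzero vector together with
its negative. -/
def StronglyConvex {n : ℕ} (σ : Set (Fin n → ℝ)) : Prop :=
  ∀ x ∈ σ, -x ∈ σ → x = 0

/-- `τ` is a face of `σ`: the zero locus on `σ` of a linear functional that is
nonnegative on `σ`. -/
def IsFaceOf {n : ℕ} (τ σ : Set (Fin n → ℝ)) : Prop :=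
  ∃ f : (Fin n → ℝ) →ₗ[ℝ] ℝ, (∀ x ∈ σ, 0 ≤ f x) ∧ τ = {x ∈ σ | f x = 0}

/-- A fan: a finite collection of strongly convex polyhedral cones, closed
under taking faces, such that the intersection of any two members is a face of
each. -/
def IsFan {n : ℕ} (Δ : Set (Set (Fin n → ℝ))) : Prop :=
  Δ.Finite ∧
  (∀ σ ∈ Δ, IsPolyhedralCone σ ∧ StronglyConvex σ) ∧
  (∀ σ ∈ Δ, ∀ τ, IsFaceOf τ σ → τ ∈ Δ) ∧
  (∀ σ ∈ Δ, ∀ σ' ∈ Δ, IsFaceOf (σ ∩ σ') σ ∧ IsFaceOf (σ ∩ σ') σ')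

lemma nonnegHull_zero_mem {n : ℕ} (s : Finset (Fin n → ℝ)) : (0 : Fin n → ℝ) ∈ nonnegHull s :=
  ⟨fun _ => 0, fun _ => le_refl 0, by simp⟩

lemma nonnegHull_self_subset {n : ℕ} (s : Finset (Fin n → ℝ)) {v : Fin n → ℝ} (hv : v ∈ s) :
    v ∈ nonnegHull s := by
  refine ⟨fun u => if u = v then 1 else 0, fun u => by positivity, ?_⟩
  have : ∀ u ∈ s, (if u = v then (1:ℝ) else 0) • u = if u = v then u else 0 := by
    intro u _; split <;> simp
  rw [Finset.sum_congr rfl this, Finset.sum_ite_eq' s v (fun u => u)]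
  simp [hv]

lemma nonnegHull_add {n : ℕ} (s : Finset (Fin n → ℝ)) {x y : Fin n → ℝ}
    (hx : x ∈ nonnegHull s) (hy : y ∈ nonnegHull s) : x + y ∈ nonnegHull s := by
  obtain ⟨c, hc, hxc⟩ := hx
  obtain ⟨d, hd, hyd⟩ := hy
  exact ⟨c + d, fun v => add_nonneg (hc v) (hd v), by
    simp [hxc, hyd, add_smul, Finset.sum_add_distrib]⟩

lemma nonnegHull_smul {n : ℕ} (s : Finset (Fin n → ℝ)) {x : Fin n → ℝ} {a : ℝ}
    (ha : 0 ≤ a) (hx : x ∈ nonnegHull s) : a • x ∈ nonnegHull s := by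
  obtain ⟨c, hc, hxc⟩ := hx
  exact ⟨a • c, fun v => mul_nonneg ha (hc v), by
    simp [hxc, Finset.smul_sum, smul_smul]⟩

/-- Separation: a linear functional positive on a finite set whose convex hull
misses the origin. -/
lemma exists_pos_functional {m : ℕ} (t : Finset (Fin m → ℝ))
    (h0 : (0 : Fin m → ℝ) ∉ convexHull ℝ (t : Set (Fin m → ℝ))) :
    ∃ f : (Fin m → ℝ) →ₗ[ℝ] ℝ, ∀ w ∈ t, 0 < f w := by
  obtain ⟨f, u, hu0, hub⟩ := geometric_hahn_banach_point_closed
    (convex_convexHull ℝ _) (t.finite_toSet.isClosed_convexHull (𝕜 := ℝ)) h0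
  refine ⟨f.toLinearMap, fun w hw => ?_⟩
  have h1 : (0:ℝ) < u := by simpa using hu0
  have h2 := hub w (subset_convexHull ℝ _ hw)
  simpa using h1.trans h2

/-- If `Δ` is a complete fan in `ℝⁿ` and `φ : ℝⁿ → ℝᵐ` is a linear map whose
image `φ(σ)` is strongly convex for every `σ ∈ Δ`, then
`Δ₀ = {σ ∈ Δ : σ ⊆ ker φ}` is a fan with support exactly `ker φ`. -/
theorem stmt_14 {n m : ℕ} (Δ : Set (Set (Fin n → ℝ))) (hΔ : IsFan Δ)
    (hcomplete : ⋃₀ Δ = Set.univ)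
    (φ : (Fin n → ℝ) →ₗ[ℝ] (Fin m → ℝ))
    (hsc : ∀ σ ∈ Δ, StronglyConvex (φ '' σ)) :
    IsFan {σ ∈ Δ | σ ⊆ (LinearMap.ker φ : Set (Fin n → ℝ))} ∧
      ⋃₀ {σ ∈ Δ | σ ⊆ (LinearMap.ker φ : Set (Fin n → ℝ))} =
        (LinearMap.ker φ : Set (Fin n → ℝ)) := by
  obtain ⟨hfin, hcones, hfaces, hinter⟩ := hΔ
  constructor
  · refine ⟨hfin.subset (Set.sep_subset _ _), ?_, ?_, ?_⟩
    · exact fun σ hσ => hcones σ hσ.1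
    · intro σ hσ τ hτ
      refine ⟨hfaces σ hσ.1 τ hτ, ?_⟩
      obtain ⟨f, _, hτeq⟩ := hτ
      intro x hx
      rw [hτeq] at hx
      exact hσ.2 hx.1
    · exact fun σ hσ σ' hσ' => hinter σ hσ.1 σ' hσ'.1
  · apply Set.Subset.antisymm
    · intro x hx
      obtain ⟨σ, hσ, hxσ⟩ := hx
      exact hσ.2 hxσ
    · -- the hard inclusion
      intro x hx
      have hx0 : φ x = 0 := hx
      -- find a cone of Δ containing x
      have : x ∈ ⋃₀ Δ := by rw [hcomplete]; trivial
      obtain ⟨σ, hσ, hxσ⟩ := this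
      obtain ⟨⟨s, hs⟩, -⟩ := hcones σ hσ
      -- generators with nonzero image
      set t : Finset (Fin m → ℝ) := (s.filter (fun v => φ v ≠ 0)).image (fun v => φ v) with ht
      -- the image cone is closed under the needed operations
      have himg : ∀ w ∈ t, w ∈ φ '' σ := by
        intro w hw
        rw [ht, Finset.mem_image] at hw
        obtain ⟨v, hv, rfl⟩ := hw
        exact ⟨v, hs ▸ nonnegHull_self_subset s (Finset.mem_filter.1 hv).1, rfl⟩
      have himg_add : ∀ a b : Fin m → ℝ, a ∈ φ '' σ → b ∈ φ '' σ → a + b ∈ φ '' σ := by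
        rintro a b ⟨xa, hxa, rfl⟩ ⟨xb, hxb, rfl⟩
        exact ⟨xa + xb, hs ▸ nonnegHull_add s (hs ▸ hxa) (hs ▸ hxb), by simp⟩
      have himg_smul : ∀ (c : ℝ), 0 ≤ c → ∀ a : Fin m → ℝ, a ∈ φ '' σ → c • a ∈ φ '' σ := by
        rintro c hc a ⟨xa, hxa, rfl⟩
        exact ⟨c • xa, hs ▸ nonnegHull_smul s hc (hs ▸ hxa), by simp⟩
      have himg_zero : (0 : Fin m → ℝ) ∈ φ '' σ :=
        ⟨0, hs ▸ nonnegHull_zero_mem s, by simp⟩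
      -- 0 is not in the convex hull of t
      have h0 : (0 : Fin m → ℝ) ∉ convexHull ℝ (t : Set (Fin m → ℝ)) := by
        intro hmem
        rw [Finset.convexHull_eq] at hmem
        obtain ⟨lam, hlam0, hlam1, hcm⟩ := hmem
        rw [Finset.centerMass_eq_of_sum_1 _ _ hlam1] at hcm
        simp only [id_eq] at hcm
        -- some weight is positive
        have : ∃ w ∈ t, 0 < lam w := by
          by_contra hno
          push_neg at hno
          have : ∑ w ∈ t, lam w = 0 :=
            Finset.sum_eq_zero (fun w hw => le_antisymm (hno w hw) (hlam0 w hw))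
          rw [hlam1] at this; exact one_ne_zero this
        obtain ⟨w₀, hw₀t, hw₀pos⟩ := this
        have key : lam w₀ • w₀ + ∑ w ∈ t.erase w₀, lam w • w = 0 := by
          rw [Finset.add_sum_erase t (fun w => lam w • w) hw₀t]; exact hcm
        have h1 : lam w₀ • w₀ ∈ φ '' σ := himg_smul _ hw₀pos.le _ (himg _ hw₀t)
        have h2 : -(lam w₀ • w₀) ∈ φ '' σ := by
          have : -(lam w₀ • w₀) = ∑ w ∈ t.erase w₀, lam w • w :=
            (eq_neg_of_add_eq_zero_right key).symm
          rw [this]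
          refine Finset.sum_induction _ (· ∈ φ '' σ) himg_add himg_zero ?_
          intro w hw
          exact himg_smul _ (hlam0 w (Finset.mem_of_mem_erase hw)) _
            (himg _ (Finset.mem_of_mem_erase hw))
        have := hsc σ hσ _ h1 h2
        have hw₀0 : w₀ = 0 := by
          have := smul_eq_zero.1 this
          rcases this with h | h
          · exact absurd h hw₀pos.ne'
          · exact h
        rw [ht, Finset.mem_image] at hw₀t
        obtain ⟨v, hv, hvw⟩ := hw₀t
        exact (Finset.mem_filter.1 hv).2 (hvw.trans hw₀0 ▸ rfl)
      obtain ⟨f, hf⟩ := exists_pos_functional t h0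
      -- value of g := f ∘ φ on cone elements
      have hval : ∀ v ∈ s, 0 ≤ f (φ v) := by
        intro v hv
        by_cases hφv : φ v = 0
        · simp [hφv]
        · exact (hf _ (Finset.mem_image.2 ⟨v, Finset.mem_filter.2 ⟨hv, hφv⟩, rfl⟩)).le
      set g : (Fin n → ℝ) →ₗ[ℝ] ℝ := f.comp φ with hg
      have hgnn : ∀ y ∈ σ, 0 ≤ g y := by
        intro y hy
        rw [hs] at hy
        obtain ⟨c, hc, rfl⟩ := hy
        have : g (∑ v ∈ s, c v • v) = ∑ v ∈ s, c v * f (φ v) := by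
          simp [hg, map_sum, map_smul, smul_eq_mul]
        rw [this]
        exact Finset.sum_nonneg (fun v hv => mul_nonneg (hc v) (hval v hv))
      set τ : Set (Fin n → ℝ) := {y ∈ σ | g y = 0} with hτ
      have hτΔ : τ ∈ Δ := hfaces σ hσ τ ⟨g, hgnn, rfl⟩
      have hτker : τ ⊆ (LinearMap.ker φ : Set (Fin n → ℝ)) := by
        rintro y ⟨hyσ, hgy⟩
        rw [hs] at hyσ
        obtain ⟨c, hc, rfl⟩ := hyσ
        have hsum : ∑ v ∈ s, c v * f (φ v) = 0 := by
          have : g (∑ v ∈ s, c v • v) = ∑ v ∈ s, c v * f (φ v) := by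
            simp [hg, map_sum, map_smul, smul_eq_mul]
          rw [← this]; exact hgy
        have hzero : ∀ v ∈ s, c v * f (φ v) = 0 :=
          (Finset.sum_eq_zero_iff_of_nonneg
            (fun v hv => mul_nonneg (hc v) (hval v hv))).1 hsum
        have : φ (∑ v ∈ s, c v • v) = ∑ v ∈ s, c v • φ v := by
          simp [map_sum, map_smul]
        simp only [SetLike.mem_coe, LinearMap.mem_ker]
        rw [this]
        apply Finset.sum_eq_zero
        intro v hv
        by_cases hφv : φ v = 0
        · simp [hφv]
        · have hfv : 0 < f (φ v) :=
            hf _ (Finset.mem_image.2 ⟨v, Finset.mem_filter.2 ⟨hv, hφv⟩, rfl⟩)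
          have : c v = 0 := by
            rcases mul_eq_zero.1 (hzero v hv) with h | h
            · exact h
            · exact absurd h hfv.ne'
          simp [this]
      have hxτ : x ∈ τ := ⟨hxσ, by simp [hg, hx0]⟩
      exact ⟨τ, ⟨hτΔ, hτker⟩, hxτ⟩
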